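/- (Nonlocal maximum principle.) Let h>0, 0<s<1, let B^h ⊂ ℤ be a nonempty finite discrete interval, and let v:ℤ→ℝ be bounded. If (-Δ_h)^s v_j ≤ 0 for every j∈B^h, then max_{j∈B^h} v_j ≤ sup_{j∈ℤ∖B^h} v_j. Similarly, if (-Δ_h)^s v_j ≥ 0 for every j∈B^h, then min_{j∈B^h} v_j ≥ inf_{j∈ℤ∖B^h} v_j. -/
import Mathlib

/-- The kernel of the fractional discrete Laplacian on the mesh of size `h`. -/
noncomputable def Ksh (h s : ℝ) (m : ℤ) : ℝ :=
  if m = 0 then 0 else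
    ((4 : ℝ) ^ s * Real.Gamma (1/2 + s) / (Real.sqrt Real.pi * (Real.Gamma (1 - s) / s))) *
      (Real.Gamma (|(m : ℝ)| - s) / (h ^ (2 * s) * Real.Gamma (|(m : ℝ)| + 1 + s)))

/-- The fractional discrete Laplacian `(-Δ_h)^s v_j = Σ_{m ≠ j} (v_j - v_m) K_s^h(j-m)`. -/
noncomputable def fracLap (h s : ℝ) (v : ℤ → ℝ) (j : ℤ) : ℝ :=
  ∑' m : ℤ, (v j - v m) * Ksh h s (j - m)

lemma Ksh_pos {h s : ℝ} (hh : 0 < h) (hs0 : 0 < s) (hs1 : s < 1) {m : ℤ} (hm : m ≠ 0) :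
    0 < Ksh h s m := by
  have habs : (1 : ℝ) ≤ |(m : ℝ)| := by
    rw [← Int.cast_abs]
    exact_mod_cast Int.one_le_abs (by omega)
  have hC : 0 < (4 : ℝ) ^ s * Real.Gamma (1/2 + s) / (Real.sqrt Real.pi * (Real.Gamma (1 - s) / s)) := by
    apply div_pos
    · exact mul_pos (Real.rpow_pos_of_pos (by norm_num) s) (Real.Gamma_pos_of_pos (by linarith))
    · exact mul_pos (Real.sqrt_pos.2 Real.pi_pos) (div_pos (Real.Gamma_pos_of_pos (by linarith)) hs0)
  have hG1 : 0 < Real.Gamma (|(m : ℝ)| - s) := Real.Gamma_pos_of_pos (by linarith)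
  have hG2 : 0 < Real.Gamma (|(m : ℝ)| + 1 + s) := Real.Gamma_pos_of_pos (by linarith)
  have hr : 0 < h ^ (2 * s) := Real.rpow_pos_of_pos hh _
  rw [Ksh, if_neg hm]
  positivity

lemma Ksh_nonneg {h s : ℝ} (hh : 0 < h) (hs0 : 0 < s) (hs1 : s < 1) (m : ℤ) :
    0 ≤ Ksh h s m := by
  rcases eq_or_ne m 0 with rfl | hm
  · simp [Ksh]
  · exact (Ksh_pos hh hs0 hs1 hm).le

lemma Ksh_neg_arg (h s : ℝ) (m : ℤ) : Ksh h s (-m) = Ksh h s m := by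
  simp only [Ksh, neg_eq_zero, Int.cast_neg, abs_neg]

lemma Ksh_sum_range (h s : ℝ) (hh : 0 < h) (hs0 : 0 < s) (hs1 : s < 1) (N : ℕ) :
    ∑ n ∈ Finset.range (N+1), Ksh h s (n : ℤ)
      = ((4 : ℝ) ^ s * Real.Gamma (1/2 + s) / (Real.sqrt Real.pi * (Real.Gamma (1 - s) / s)))
          / h ^ (2 * s) / (2 * s)
          * (Real.Gamma (1 - s) / Real.Gamma (1 + s)
              - Real.Gamma (((N : ℝ) + 1) - s) / Real.Gamma (((N : ℝ) + 1) + s)) := by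
  induction N with
  | zero =>
    simp [Ksh]
  | succ N ih =>
    rw [Finset.sum_range_succ, ih]
    have hx1 : (1 : ℝ) ≤ (N : ℝ) + 1 := by linarith [Nat.cast_nonneg (α := ℝ) N]
    set x : ℝ := (N : ℝ) + 1 with hxdef
    have hKval : Ksh h s ((N+1 : ℕ) : ℤ)
        = ((4 : ℝ) ^ s * Real.Gamma (1/2 + s) / (Real.sqrt Real.pi * (Real.Gamma (1 - s) / s))) *
          (Real.Gamma (x - s) / (h ^ (2 * s) * Real.Gamma (x + 1 + s))) := by
      rw [Ksh, if_neg (by exact_mod_cast Nat.succ_ne_zero N)]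
      have : |(((N+1 : ℕ) : ℤ) : ℝ)| = x := by
        push_cast
        rw [abs_of_nonneg (by positivity)]
      rw [this]
    rw [hKval]
    have hG1 : (0:ℝ) < Real.Gamma (x - s) := Real.Gamma_pos_of_pos (by linarith)
    have hG2 : (0:ℝ) < Real.Gamma (x + s) := Real.Gamma_pos_of_pos (by linarith)
    have e1 : Real.Gamma (x + 1 - s) = (x - s) * Real.Gamma (x - s) := by
      rw [show x + 1 - s = (x - s) + 1 by ring, Real.Gamma_add_one (show (0:ℝ) < x - s by linarith).ne']
    have e2 : Real.Gamma (x + 1 + s) = (x + s) * Real.Gamma (x + s) := by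
      rw [show x + 1 + s = (x + s) + 1 by ring, Real.Gamma_add_one (show (0:ℝ) < x + s by linarith).ne']
    have hc1 : ((N + 1 : ℕ) : ℝ) + 1 - s = x + 1 - s := by push_cast [hxdef]; ring
    have hc2 : ((N + 1 : ℕ) : ℝ) + 1 + s = x + 1 + s := by push_cast [hxdef]; ring
    rw [hc1, hc2, e1, e2]
    have hhs : h ^ (2*s) ≠ 0 := (Real.rpow_pos_of_pos hh _).ne'
    set C0 : ℝ := (4 : ℝ) ^ s * Real.Gamma (1/2 + s) / (Real.sqrt Real.pi * (Real.Gamma (1 - s) / s)) with hC0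
    set G1 : ℝ := Real.Gamma (x - s)
    set G2 : ℝ := Real.Gamma (x + s)
    set G3 : ℝ := Real.Gamma (1 - s)
    set G4 : ℝ := Real.Gamma (1 + s)
    have hxs : x + s ≠ 0 := by positivity
    field_simp
    ring

lemma Ksh_summable (h s : ℝ) (hh : 0 < h) (hs0 : 0 < s) (hs1 : s < 1) :
    Summable (Ksh h s) := by
  have hnat : Summable (fun n : ℕ => Ksh h s (n : ℤ)) := by
    apply summable_of_sum_range_le
      (c := ((4 : ℝ) ^ s * Real.Gamma (1/2 + s) / (Real.sqrt Real.pi * (Real.Gamma (1 - s) / s)))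
          / h ^ (2 * s) / (2 * s) * (Real.Gamma (1 - s) / Real.Gamma (1 + s)))
      (fun n => Ksh_nonneg hh hs0 hs1 _)
    intro n
    calc ∑ i ∈ Finset.range n, Ksh h s (i : ℤ)
        ≤ ∑ i ∈ Finset.range (n+1), Ksh h s (i : ℤ) :=
          Finset.sum_le_sum_of_subset_of_nonneg
            (Finset.range_subset_range.2 (Nat.le_succ n)) (fun i _ _ => Ksh_nonneg hh hs0 hs1 _)
      _ ≤ _ := by
          rw [Ksh_sum_range h s hh hs0 hs1 n]
          have hC : 0 ≤ ((4 : ℝ) ^ s * Real.Gamma (1/2 + s) /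
              (Real.sqrt Real.pi * (Real.Gamma (1 - s) / s))) / h ^ (2 * s) / (2 * s) := by
            have h1 : 0 < (4 : ℝ) ^ s := Real.rpow_pos_of_pos (by norm_num) s
            have h2 : 0 < Real.Gamma (1/2 + s) := Real.Gamma_pos_of_pos (by linarith)
            have h3 : 0 < Real.sqrt Real.pi := Real.sqrt_pos.2 Real.pi_pos
            have h4 : 0 < Real.Gamma (1 - s) := Real.Gamma_pos_of_pos (by linarith)
            have h5 : 0 < h ^ (2 * s) := Real.rpow_pos_of_pos hh _
            positivity
          have hA : 0 ≤ Real.Gamma (((n : ℝ) + 1) - s) / Real.Gamma (((n : ℝ) + 1) + s) := by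
            have := Nat.cast_nonneg (α := ℝ) n
            exact le_of_lt (div_pos (Real.Gamma_pos_of_pos (by linarith))
              (Real.Gamma_pos_of_pos (by linarith)))
          exact mul_le_mul_of_nonneg_left (by linarith) hC
  refine Summable.of_nat_of_neg_add_one hnat ?_
  have heq : (fun n : ℕ => Ksh h s (-((n : ℤ) + 1))) = fun n : ℕ => Ksh h s (((n : ℤ)) + 1) := by
    funext n
    rw [Ksh_neg_arg]
  rw [heq]
  have h2 := (summable_nat_add_iff (f := fun n : ℕ => Ksh h s (n : ℤ)) 1).2 hnat
  have heq2 : (fun n : ℕ => Ksh h s ((n : ℤ) + 1)) = fun n : ℕ => Ksh h s ((n + 1 : ℕ) : ℤ) := by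
    funext n
    norm_num
  rw [heq2]
  exact h2

lemma fracLap_summable (h s : ℝ) (hh : 0 < h) (hs0 : 0 < s) (hs1 : s < 1)
    (v : ℤ → ℝ) (M : ℝ) (hv : ∀ j : ℤ, |v j| ≤ M) (j : ℤ) :
    Summable (fun m : ℤ => (v j - v m) * Ksh h s (j - m)) := by
  have hinj : Function.Injective (fun m : ℤ => j - m) := fun m n hmn => by simp only [sub_right_inj] at hmn; exact hmn
  have h1 : Summable (fun m : ℤ => Ksh h s (j - m)) :=
    (Ksh_summable h s hh hs0 hs1).comp_injective hinj
  have h2 : Summable (fun m : ℤ => |(v j - v m) * Ksh h s (j - m)|) := by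
    apply Summable.of_nonneg_of_le (fun m => abs_nonneg _) _ (h1.mul_left (2 * M))
    intro m
    rw [abs_mul, abs_of_nonneg (Ksh_nonneg hh hs0 hs1 _)]
    apply mul_le_mul_of_nonneg_right _ (Ksh_nonneg hh hs0 hs1 _)
    have hj := abs_le.1 (hv j)
    have hm := abs_le.1 (hv m)
    exact abs_le.2 ⟨by linarith, by linarith⟩
  exact summable_abs_iff.mp h2

/-- Nonlocal maximum principle on a finite discrete interval `B^h = Set.Icc a b`:
subsolutions are dominated by their supremum outside `B^h`, and supersolutions
dominate their infimum outside `B^h`. -/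
theorem nonlocal_maximum_principle (h s : ℝ) (hh : 0 < h) (hs0 : 0 < s) (hs1 : s < 1)
    (a b : ℤ) (hab : a ≤ b) (v : ℤ → ℝ) (M : ℝ) (hv : ∀ j : ℤ, |v j| ≤ M) :
    ((∀ j ∈ Set.Icc a b, fracLap h s v j ≤ 0) →
      ∀ j ∈ Set.Icc a b, v j ≤ ⨆ m : {m : ℤ // m ∉ Set.Icc a b}, v m) ∧
    ((∀ j ∈ Set.Icc a b, 0 ≤ fracLap h s v j) →
      ∀ j ∈ Set.Icc a b, (⨅ m : {m : ℤ // m ∉ Set.Icc a b}, v m) ≤ v j) := by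
  have hsum := fracLap_summable h s hh hs0 hs1 v M hv
  have hne : (Finset.Icc a b).Nonempty := ⟨a, Finset.mem_Icc.2 ⟨le_refl a, hab⟩⟩
  have hout : (a - 1) ∉ Set.Icc a b := by
    rw [Set.mem_Icc]; omega
  have hBddA : BddAbove (Set.range fun m : {m : ℤ // m ∉ Set.Icc a b} => v m) := by
    refine ⟨M, ?_⟩
    rintro x ⟨m, rfl⟩
    exact (abs_le.1 (hv m)).2
  have hBddB : BddBelow (Set.range fun m : {m : ℤ // m ∉ Set.Icc a b} => v m) := by
    refine ⟨-M, ?_⟩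
    rintro x ⟨m, rfl⟩
    exact (abs_le.1 (hv m)).1
  constructor
  · intro H j hj
    obtain ⟨j0, hj0mem, hj0max⟩ := (Finset.Icc a b).exists_max_image v hne
    have hj0' : j0 ∈ Set.Icc a b := by
      rw [Set.mem_Icc]; exact Finset.mem_Icc.1 hj0mem
    have key : v j0 ≤ ⨆ m : {m : ℤ // m ∉ Set.Icc a b}, v m := by
      by_contra hcon
      push_neg at hcon
      have houtlt : ∀ m : ℤ, m ∉ Set.Icc a b → v m < v j0 := fun m hm =>
        lt_of_le_of_lt (le_ciSup hBddA ⟨m, hm⟩) hcon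
      have hpos : 0 < fracLap h s v j0 := by
        refine Summable.tsum_pos (hsum j0) ?_ (a - 1) ?_
        · intro m
          rcases em (m ∈ Set.Icc a b) with hm | hm
          · refine mul_nonneg (sub_nonneg.2 (hj0max m ?_)) (Ksh_nonneg hh hs0 hs1 _)
            rw [Finset.mem_Icc]; exact Set.mem_Icc.1 hm
          · exact mul_nonneg (sub_nonneg.2 (houtlt m hm).le) (Ksh_nonneg hh hs0 hs1 _)
        · have h1 : 0 < v j0 - v (a - 1) := sub_pos.2 (houtlt _ hout)
          have haj0 : a ≤ j0 := (Set.mem_Icc.1 hj0').1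
          have h2 : 0 < Ksh h s (j0 - (a - 1)) :=
            Ksh_pos hh hs0 hs1 (by omega)
          exact mul_pos h1 h2
      linarith [H j0 hj0']
    refine le_trans (hj0max j ?_) key
    rw [Finset.mem_Icc]; exact Set.mem_Icc.1 hj
  · intro H j hj
    obtain ⟨j0, hj0mem, hj0min⟩ := (Finset.Icc a b).exists_min_image v hne
    have hj0' : j0 ∈ Set.Icc a b := by
      rw [Set.mem_Icc]; exact Finset.mem_Icc.1 hj0mem
    have key : (⨅ m : {m : ℤ // m ∉ Set.Icc a b}, v m) ≤ v j0 := by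
      by_contra hcon
      push_neg at hcon
      have houtlt : ∀ m : ℤ, m ∉ Set.Icc a b → v j0 < v m := fun m hm =>
        lt_of_lt_of_le hcon (ciInf_le hBddB ⟨m, hm⟩)
      have hpos : 0 < ∑' m : ℤ, -((v j0 - v m) * Ksh h s (j0 - m)) := by
        refine Summable.tsum_pos (hsum j0).neg ?_ (a - 1) ?_
        · intro m
          rw [neg_nonneg]
          rcases em (m ∈ Set.Icc a b) with hm | hm
          · refine mul_nonpos_of_nonpos_of_nonneg (sub_nonpos.2 (hj0min m ?_))
              (Ksh_nonneg hh hs0 hs1 _)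
            rw [Finset.mem_Icc]; exact Set.mem_Icc.1 hm
          · exact mul_nonpos_of_nonpos_of_nonneg (sub_nonpos.2 (houtlt m hm).le)
              (Ksh_nonneg hh hs0 hs1 _)
        · rw [neg_pos]
          have h1 : v j0 - v (a - 1) < 0 := sub_neg.2 (houtlt _ hout)
          have haj0 : a ≤ j0 := (Set.mem_Icc.1 hj0').1
          have h2 : 0 < Ksh h s (j0 - (a - 1)) :=
            Ksh_pos hh hs0 hs1 (by omega)
          exact mul_neg_of_neg_of_pos h1 h2
      rw [tsum_neg] at hpos
      have := H j0 hj0'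
      rw [fracLap] at this
      linarith
    exact le_trans key (hj0min j (by rw [Finset.mem_Icc]; exact Set.mem_Icc.1 hj))
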